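/- For the unit disk Neumann Green's function regular part R(x;ξ) = -(1/(2π))[½ log(1 + |x|²|ξ|² - 2x·ξ) - ½(|ξ|² + |x|²) + 3/4], the limits as x → ξ satisfy R_{ξ₁ξ₁} - R_{ξ₂ξ₂} = (1/π)(ξ₁² - ξ₂²)/(1-|ξ|²)² and R_{ξ₁ξ₂} = (1/π)ξ₁ξ₂/(1-|ξ|²)². -/

import Mathlib

open Filter Topology

/-- Regular part of the Neumann Green's function of the unit disk. -/
noncomputable def Rreg (x ξ : ℝ × ℝ) : ℝ :=
  -(1 / (2 * Real.pi)) *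
    ((1 / 2) * Real.log (1 + (x.1 ^ 2 + x.2 ^ 2) * (ξ.1 ^ 2 + ξ.2 ^ 2)
        - 2 * (x.1 * ξ.1 + x.2 * ξ.2))
      - (1 / 2) * ((ξ.1 ^ 2 + ξ.2 ^ 2) + (x.1 ^ 2 + x.2 ^ 2)) + 3 / 4)

noncomputable def Aq (x : ℝ × ℝ) (s t : ℝ) : ℝ :=
  1 + (x.1 ^ 2 + x.2 ^ 2) * (s ^ 2 + t ^ 2) - 2 * (x.1 * s + x.2 * t)

lemma hasDerivAt_Aq1 (x : ℝ × ℝ) (t s : ℝ) :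
    HasDerivAt (fun s' => Aq x s' t) ((x.1 ^ 2 + x.2 ^ 2) * (2 * s) - 2 * x.1) s := by
  unfold Aq
  have h1 : HasDerivAt (fun s' : ℝ => s' ^ 2) (2 * s) s := by simpa using hasDerivAt_pow 2 s
  have h2 : HasDerivAt (fun s' : ℝ => (x.1 ^ 2 + x.2 ^ 2) * (s' ^ 2 + t ^ 2))
      ((x.1 ^ 2 + x.2 ^ 2) * (2 * s)) s := (h1.add_const _).const_mul _
  have h3 : HasDerivAt (fun s' : ℝ => 2 * (x.1 * s' + x.2 * t)) (2 * x.1) s := by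
    simpa using (((hasDerivAt_id s).const_mul x.1).add_const (x.2 * t)).const_mul 2
  exact (h2.const_add 1).sub h3

lemma hasDerivAt_Aq2 (x : ℝ × ℝ) (s t : ℝ) :
    HasDerivAt (fun t' => Aq x s t') ((x.1 ^ 2 + x.2 ^ 2) * (2 * t) - 2 * x.2) t := by
  unfold Aq
  have h1 : HasDerivAt (fun t' : ℝ => t' ^ 2) (2 * t) t := by simpa using hasDerivAt_pow 2 t
  have h2 : HasDerivAt (fun t' : ℝ => (x.1 ^ 2 + x.2 ^ 2) * (s ^ 2 + t' ^ 2))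
      ((x.1 ^ 2 + x.2 ^ 2) * (2 * t)) t := (h1.const_add _).const_mul _
  have h3 : HasDerivAt (fun t' : ℝ => 2 * (x.1 * s + x.2 * t')) (2 * x.2) t := by
    simpa using (((hasDerivAt_id t).const_mul x.2).const_add (x.1 * s)).const_mul 2
  exact (h2.const_add 1).sub h3

lemma hasDerivAt_R1 (x : ℝ × ℝ) (t s : ℝ) (h : 0 < Aq x s t) :
    HasDerivAt (fun s' => Rreg x (s', t))
      (-(1 / (2 * Real.pi)) * (((x.1 ^ 2 + x.2 ^ 2) * s - x.1) / Aq x s t - s)) s := by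
  have hA := hasDerivAt_Aq1 x t s
  have hlog := hA.log h.ne'
  have h1 : HasDerivAt (fun s' : ℝ => s' ^ 2) (2 * s) s := by simpa using hasDerivAt_pow 2 s
  have hsq : HasDerivAt (fun s' : ℝ => (1 / 2 : ℝ) * ((s' ^ 2 + t ^ 2) + (x.1 ^ 2 + x.2 ^ 2)))
      ((1 / 2 : ℝ) * (2 * s)) s := ((h1.add_const _).add_const _).const_mul _
  have hfin := (((hlog.const_mul (1 / 2 : ℝ)).sub hsq).add_const (3 / 4 : ℝ)).const_mul
      (-(1 / (2 * Real.pi)))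
  have hfun : (fun s' => Rreg x (s', t)) = fun s' => -(1 / (2 * Real.pi)) *
      ((1 / 2 : ℝ) * Real.log (Aq x s' t)
        - (1 / 2 : ℝ) * ((s' ^ 2 + t ^ 2) + (x.1 ^ 2 + x.2 ^ 2)) + 3 / 4) := by
    funext s'; simp [Rreg, Aq]
  rw [hfun]
  refine hfin.congr_deriv ?_
  have hAne : Aq x s t ≠ 0 := h.ne'
  ring

lemma hasDerivAt_R2 (x : ℝ × ℝ) (s t : ℝ) (h : 0 < Aq x s t) :
    HasDerivAt (fun t' => Rreg x (s, t'))
      (-(1 / (2 * Real.pi)) * (((x.1 ^ 2 + x.2 ^ 2) * t - x.2) / Aq x s t - t)) t := by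
  have hA := hasDerivAt_Aq2 x s t
  have hlog := hA.log h.ne'
  have h1 : HasDerivAt (fun t' : ℝ => t' ^ 2) (2 * t) t := by simpa using hasDerivAt_pow 2 t
  have hsq : HasDerivAt (fun t' : ℝ => (1 / 2 : ℝ) * ((s ^ 2 + t' ^ 2) + (x.1 ^ 2 + x.2 ^ 2)))
      ((1 / 2 : ℝ) * (2 * t)) t := ((h1.const_add _).add_const _).const_mul _
  have hfin := (((hlog.const_mul (1 / 2 : ℝ)).sub hsq).add_const (3 / 4 : ℝ)).const_mul
      (-(1 / (2 * Real.pi)))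
  have hfun : (fun t' => Rreg x (s, t')) = fun t' => -(1 / (2 * Real.pi)) *
      ((1 / 2 : ℝ) * Real.log (Aq x s t')
        - (1 / 2 : ℝ) * ((s ^ 2 + t' ^ 2) + (x.1 ^ 2 + x.2 ^ 2)) + 3 / 4) := by
    funext t'; simp [Rreg, Aq]
  rw [hfun]
  refine hfin.congr_deriv ?_
  have hAne : Aq x s t ≠ 0 := h.ne'
  ring

lemma hasDerivAt_R11 (x : ℝ × ℝ) (t s : ℝ) (h : 0 < Aq x s t) :
    HasDerivAt (fun s' => -(1 / (2 * Real.pi)) *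
        (((x.1 ^ 2 + x.2 ^ 2) * s' - x.1) / Aq x s' t - s'))
      (-(1 / (2 * Real.pi)) *
        (((x.1 ^ 2 + x.2 ^ 2) * Aq x s t - ((x.1 ^ 2 + x.2 ^ 2) * s - x.1) *
            ((x.1 ^ 2 + x.2 ^ 2) * (2 * s) - 2 * x.1)) / (Aq x s t) ^ 2 - 1)) s := by
  have hA := hasDerivAt_Aq1 x t s
  have hnum : HasDerivAt (fun s' : ℝ => (x.1 ^ 2 + x.2 ^ 2) * s' - x.1) (x.1 ^ 2 + x.2 ^ 2) s := by
    simpa using ((hasDerivAt_id s).const_mul (x.1 ^ 2 + x.2 ^ 2)).sub_const x.1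
  have hdiv := hnum.div hA h.ne'
  simpa using (hdiv.sub (hasDerivAt_id s)).const_mul (-(1 / (2 * Real.pi)))

lemma hasDerivAt_R22 (x : ℝ × ℝ) (s t : ℝ) (h : 0 < Aq x s t) :
    HasDerivAt (fun t' => -(1 / (2 * Real.pi)) *
        (((x.1 ^ 2 + x.2 ^ 2) * t' - x.2) / Aq x s t' - t'))
      (-(1 / (2 * Real.pi)) *
        (((x.1 ^ 2 + x.2 ^ 2) * Aq x s t - ((x.1 ^ 2 + x.2 ^ 2) * t - x.2) *
            ((x.1 ^ 2 + x.2 ^ 2) * (2 * t) - 2 * x.2)) / (Aq x s t) ^ 2 - 1)) t := by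
  have hA := hasDerivAt_Aq2 x s t
  have hnum : HasDerivAt (fun t' : ℝ => (x.1 ^ 2 + x.2 ^ 2) * t' - x.2) (x.1 ^ 2 + x.2 ^ 2) t := by
    simpa using ((hasDerivAt_id t).const_mul (x.1 ^ 2 + x.2 ^ 2)).sub_const x.2
  have hdiv := hnum.div hA h.ne'
  simpa using (hdiv.sub (hasDerivAt_id t)).const_mul (-(1 / (2 * Real.pi)))

lemma hasDerivAt_R21 (x : ℝ × ℝ) (t s : ℝ) (h : 0 < Aq x s t) :
    HasDerivAt (fun s' => -(1 / (2 * Real.pi)) *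
        (((x.1 ^ 2 + x.2 ^ 2) * t - x.2) / Aq x s' t - t))
      (-(1 / (2 * Real.pi)) *
        (-(((x.1 ^ 2 + x.2 ^ 2) * t - x.2) *
            ((x.1 ^ 2 + x.2 ^ 2) * (2 * s) - 2 * x.1)) / (Aq x s t) ^ 2)) s := by
  have hA := hasDerivAt_Aq1 x t s
  have hdiv := (hasDerivAt_const s ((x.1 ^ 2 + x.2 ^ 2) * t - x.2)).div hA h.ne'
  have := (hdiv.sub_const t).const_mul (-(1 / (2 * Real.pi)))
  refine this.congr_deriv ?_
  have hAne : Aq x s t ≠ 0 := h.ne'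
  ring

/-- As x → ξ, R_{ξ₁ξ₁} - R_{ξ₂ξ₂} → (1/π)(ξ₁²-ξ₂²)/(1-|ξ|²)² and
R_{ξ₁ξ₂} → (1/π)ξ₁ξ₂/(1-|ξ|²)². -/
theorem stmt_11 (ξ : ℝ × ℝ) (hξ : ξ.1 ^ 2 + ξ.2 ^ 2 < 1) :
    Tendsto
      (fun x : ℝ × ℝ =>
        deriv (fun s => deriv (fun t => Rreg x (t, ξ.2)) s) ξ.1 -
          deriv (fun s => deriv (fun t => Rreg x (ξ.1, t)) s) ξ.2)
      (𝓝 ξ)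
      (𝓝 ((1 / Real.pi) * (ξ.1 ^ 2 - ξ.2 ^ 2) / (1 - (ξ.1 ^ 2 + ξ.2 ^ 2)) ^ 2)) ∧
    Tendsto
      (fun x : ℝ × ℝ =>
        deriv (fun s => deriv (fun t => Rreg x (s, t)) ξ.2) ξ.1)
      (𝓝 ξ)
      (𝓝 ((1 / Real.pi) * (ξ.1 * ξ.2) / (1 - (ξ.1 ^ 2 + ξ.2 ^ 2)) ^ 2)) := by
  have h1Q : 0 < 1 - (ξ.1 ^ 2 + ξ.2 ^ 2) := by linarith
  have hA0 : Aq ξ ξ.1 ξ.2 = (1 - (ξ.1 ^ 2 + ξ.2 ^ 2)) ^ 2 := by unfold Aq; ring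
  have hA0pos : 0 < Aq ξ ξ.1 ξ.2 := by rw [hA0]; exact pow_pos h1Q 2
  -- find a uniform positivity neighborhood
  have hcont : Continuous (fun p : ((ℝ × ℝ) × ℝ) × ℝ => Aq p.1.1 p.1.2 p.2) := by
    unfold Aq; fun_prop
  have hO : IsOpen {p : ((ℝ × ℝ) × ℝ) × ℝ | 0 < Aq p.1.1 p.1.2 p.2} :=
    isOpen_lt continuous_const hcont
  obtain ⟨ε, hε, hb⟩ := Metric.isOpen_iff.1 hO ((ξ, ξ.1), ξ.2) hA0pos
  have key : ∀ x s t, dist x ξ < ε → |s - ξ.1| < ε → |t - ξ.2| < ε → 0 < Aq x s t := by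
    intro x s t hx hs ht
    have : (((x, s), t) : ((ℝ × ℝ) × ℝ) × ℝ) ∈ Metric.ball ((ξ, ξ.1), ξ.2) ε := by
      simp only [Metric.mem_ball, Prod.dist_eq, Real.dist_eq]
      exact max_lt (max_lt hx hs) ht
    exact hb this
  have hεself : ∀ x, dist x ξ < ε → 0 < Aq x ξ.1 ξ.2 := fun x hx =>
    key x ξ.1 ξ.2 hx (by simpa using hε) (by simpa using hε)
  have hAcont : ContinuousAt (fun x : ℝ × ℝ => Aq x ξ.1 ξ.2) ξ := by
    unfold Aq; fun_prop
  have hA2ne : (Aq ξ ξ.1 ξ.2) ^ 2 ≠ 0 := pow_ne_zero _ hA0pos.ne'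
  constructor
  · -- D11 - D22
    set Φ : ℝ × ℝ → ℝ := fun x => (1 / (2 * Real.pi)) *
      ((((x.1 ^ 2 + x.2 ^ 2) * ξ.1 - x.1) * ((x.1 ^ 2 + x.2 ^ 2) * (2 * ξ.1) - 2 * x.1) -
        ((x.1 ^ 2 + x.2 ^ 2) * ξ.2 - x.2) * ((x.1 ^ 2 + x.2 ^ 2) * (2 * ξ.2) - 2 * x.2)) /
        (Aq x ξ.1 ξ.2) ^ 2) with hΦ
    have hΦcont : ContinuousAt Φ ξ := by
      apply ContinuousAt.mul continuousAt_const
      exact ContinuousAt.div (by fun_prop) (hAcont.pow 2) hA2ne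
    have hΦval : Φ ξ = (1 / Real.pi) * (ξ.1 ^ 2 - ξ.2 ^ 2) / (1 - (ξ.1 ^ 2 + ξ.2 ^ 2)) ^ 2 := by
      rw [hΦ]
      simp only [hA0]
      field_simp
      ring
    refine Tendsto.congr' ?_ (by rw [← hΦval]; exact hΦcont.tendsto)
    filter_upwards [Metric.ball_mem_nhds ξ hε] with x hx
    rw [Metric.mem_ball] at hx
    have hAx : 0 < Aq x ξ.1 ξ.2 := hεself x hx
    have hd11 : deriv (fun s => deriv (fun t => Rreg x (t, ξ.2)) s) ξ.1 =
        -(1 / (2 * Real.pi)) *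
        (((x.1 ^ 2 + x.2 ^ 2) * Aq x ξ.1 ξ.2 - ((x.1 ^ 2 + x.2 ^ 2) * ξ.1 - x.1) *
            ((x.1 ^ 2 + x.2 ^ 2) * (2 * ξ.1) - 2 * x.1)) / (Aq x ξ.1 ξ.2) ^ 2 - 1) := by
      have hEq : (fun s => deriv (fun t => Rreg x (t, ξ.2)) s) =ᶠ[𝓝 ξ.1]
          (fun s => -(1 / (2 * Real.pi)) *
            (((x.1 ^ 2 + x.2 ^ 2) * s - x.1) / Aq x s ξ.2 - s)) := by
        filter_upwards [Metric.ball_mem_nhds ξ.1 hε] with s hs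
        rw [Metric.mem_ball, Real.dist_eq] at hs
        exact (hasDerivAt_R1 x ξ.2 s (key x s ξ.2 hx hs (by simpa using hε))).deriv
      rw [hEq.deriv_eq]
      exact (hasDerivAt_R11 x ξ.2 ξ.1 hAx).deriv
    have hd22 : deriv (fun s => deriv (fun t => Rreg x (ξ.1, t)) s) ξ.2 =
        -(1 / (2 * Real.pi)) *
        (((x.1 ^ 2 + x.2 ^ 2) * Aq x ξ.1 ξ.2 - ((x.1 ^ 2 + x.2 ^ 2) * ξ.2 - x.2) *
            ((x.1 ^ 2 + x.2 ^ 2) * (2 * ξ.2) - 2 * x.2)) / (Aq x ξ.1 ξ.2) ^ 2 - 1) := by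
      have hEq : (fun t => deriv (fun t' => Rreg x (ξ.1, t')) t) =ᶠ[𝓝 ξ.2]
          (fun t => -(1 / (2 * Real.pi)) *
            (((x.1 ^ 2 + x.2 ^ 2) * t - x.2) / Aq x ξ.1 t - t)) := by
        filter_upwards [Metric.ball_mem_nhds ξ.2 hε] with t ht
        rw [Metric.mem_ball, Real.dist_eq] at ht
        exact (hasDerivAt_R2 x ξ.1 t (key x ξ.1 t hx (by simpa using hε) ht)).deriv
      rw [hEq.deriv_eq]
      exact (hasDerivAt_R22 x ξ.1 ξ.2 hAx).deriv
    rw [hΦ]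
    rw [hd11, hd22]
    have hAne : Aq x ξ.1 ξ.2 ≠ 0 := hAx.ne'
    field_simp
    ring
  · -- mixed
    set Φ : ℝ × ℝ → ℝ := fun x => (1 / (2 * Real.pi)) *
      ((((x.1 ^ 2 + x.2 ^ 2) * ξ.2 - x.2) * ((x.1 ^ 2 + x.2 ^ 2) * (2 * ξ.1) - 2 * x.1)) /
        (Aq x ξ.1 ξ.2) ^ 2) with hΦ
    have hΦcont : ContinuousAt Φ ξ := by
      apply ContinuousAt.mul continuousAt_const
      exact ContinuousAt.div (by fun_prop) (hAcont.pow 2) hA2ne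
    have hΦval : Φ ξ = (1 / Real.pi) * (ξ.1 * ξ.2) / (1 - (ξ.1 ^ 2 + ξ.2 ^ 2)) ^ 2 := by
      rw [hΦ]
      simp only [hA0]
      field_simp
      ring
    refine Tendsto.congr' ?_ (by rw [← hΦval]; exact hΦcont.tendsto)
    filter_upwards [Metric.ball_mem_nhds ξ hε] with x hx
    rw [Metric.mem_ball] at hx
    have hAx : 0 < Aq x ξ.1 ξ.2 := hεself x hx
    have hEq : (fun s => deriv (fun t => Rreg x (s, t)) ξ.2) =ᶠ[𝓝 ξ.1]
        (fun s => -(1 / (2 * Real.pi)) *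
          (((x.1 ^ 2 + x.2 ^ 2) * ξ.2 - x.2) / Aq x s ξ.2 - ξ.2)) := by
      filter_upwards [Metric.ball_mem_nhds ξ.1 hε] with s hs
      rw [Metric.mem_ball, Real.dist_eq] at hs
      exact (hasDerivAt_R2 x s ξ.2 (key x s ξ.2 hx hs (by simpa using hε))).deriv
    rw [hEq.deriv_eq, (hasDerivAt_R21 x ξ.2 ξ.1 hAx).deriv, hΦ]
    have hAne : Aq x ξ.1 ξ.2 ≠ 0 := hAx.ne'
    field_simp
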